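/- Every duoseparable locally compact topological group is σ-compact. -/

import Mathlib

open Pointwise

theorem stmt3 (X : Type*) [Group X] [TopologicalSpace X] [IsTopologicalGroup X]
    [LocallyCompactSpace X]
    (h : ∃ S : Set X, S.Countable ∧ ∀ U ∈ nhds (1 : X), S * U * S = Set.univ) :
    SigmaCompactSpace X := by
  obtain ⟨S, hS, hSU⟩ := h
  obtain ⟨K, hKc, hKn⟩ := exists_compact_mem_nhds (1 : X)
  have key : (Set.univ : Set X) = ⋃ p : S × S, (fun x => (p.1 : X) * x * (p.2 : X)) '' K := by
    rw [← hSU K hKn]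
    ext x
    simp only [Set.mem_iUnion, Set.mem_image, Set.mem_mul]
    constructor
    · rintro ⟨_, ⟨a, ha, k, hk, rfl⟩, b, hb, rfl⟩
      exact ⟨⟨⟨a, ha⟩, ⟨b, hb⟩⟩, k, hk, rfl⟩
    · rintro ⟨⟨⟨a, ha⟩, ⟨b, hb⟩⟩, k, hk, rfl⟩
      exact ⟨a * k, ⟨a, ha, k, hk, rfl⟩, b, hb, rfl⟩
  haveI : Countable (↥S × ↥S) := by
    haveI := hS.to_subtype
    infer_instance
  rw [← isSigmaCompact_univ_iff, key]
  exact isSigmaCompact_iUnion_of_isCompact _ fun p =>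
    hKc.image (by continuity)
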